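/- Let 0 < δ ≤ 0.04 and 0 ≤ ν ≤ 0.04. Then ω_sup < π/2 and ω_sup satisfies the fixed-point equation sin(ω_sup) = C_δ·(δ·tan(ω_sup) + (1+δ)·ν·sec(ω_sup)); equivalently, ω_sup = arcsin(C_δ·(δ·tan(ω_sup) + (1+δ)·ν·sec(ω_sup))). -/

import Mathlib

noncomputable def Cdelta (δ : ℝ) : ℝ :=
  1.1 * (Real.sqrt (2 / (1 - δ ^ 2)) + 1 / (1 - δ)) /
    (1 - Real.sqrt (2 / (1 - δ ^ 2)) * δ)

noncomputable def omegaSup (δ ν : ℝ) : ℝ :=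
  sSup {ω : ℝ | ω ∈ Set.Ico 0 (Real.pi / 2) ∧
    Real.arcsin (Cdelta δ * (δ * Real.tan ω + (1 + δ) * ν * (1 / Real.cos ω))) ≤ ω}

lemma Cdelta_bounds (δ : ℝ) (hδ0 : 0 < δ) (hδ : δ ≤ 0.04) :
    2.6 ≤ Cdelta δ ∧ Cdelta δ ≤ 2.88 := by
  set s := Real.sqrt (2 / (1 - δ ^ 2)) with hs
  have hδ2 : δ ^ 2 ≤ 0.0016 := by nlinarith
  have h1 : (0:ℝ) < 1 - δ ^ 2 := by nlinarith
  have hs0 : 0 ≤ s := Real.sqrt_nonneg _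
  have hs2 : s ^ 2 = 2 / (1 - δ ^ 2) := Real.sq_sqrt (by positivity)
  have hs2le : s ^ 2 ≤ 2.0033 := by
    rw [hs2, div_le_iff₀ h1]; nlinarith
  have hs2ge : 2 ≤ s ^ 2 := by
    rw [hs2, le_div_iff₀ h1]; nlinarith
  have hsle : s ≤ 1.416 := by nlinarith [sq_nonneg (s - 1.416)]
  have hsge : 1.41 ≤ s := by nlinarith [sq_nonneg (s - 1.41)]
  have hD : (0.94:ℝ) ≤ 1 - s * δ := by nlinarith
  have hD1 : 1 - s * δ ≤ 1 := by nlinarith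
  have hinv : 1 / (1 - δ) ≤ 1 / 0.96 := by
    apply one_div_le_one_div_of_le <;> linarith
  have hinv1 : 1 ≤ 1 / (1 - δ) := by
    rw [le_div_iff₀ (by linarith : (0:ℝ) < 1 - δ)]; linarith
  constructor
  · rw [Cdelta, div_eq_mul_inv]
    have : (1:ℝ) ≤ (1 - s * δ)⁻¹ := by
      rw [le_inv_comm₀] <;> nlinarith
    nlinarith
  · rw [Cdelta, div_le_iff₀ (by linarith)]
    nlinarith

theorem omegaSup_fixed_point (δ ν : ℝ) (hδ0 : 0 < δ) (hδ : δ ≤ 0.04)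
    (hν0 : 0 ≤ ν) (hν : ν ≤ 0.04) :
    omegaSup δ ν < Real.pi / 2 ∧
    Real.sin (omegaSup δ ν) =
      Cdelta δ * (δ * Real.tan (omegaSup δ ν) +
        (1 + δ) * ν * (1 / Real.cos (omegaSup δ ν))) ∧
    omegaSup δ ν =
      Real.arcsin (Cdelta δ * (δ * Real.tan (omegaSup δ ν) +
        (1 + δ) * ν * (1 / Real.cos (omegaSup δ ν)))) := by
  obtain ⟨hC1, hC2⟩ := Cdelta_bounds δ hδ0 hδ
  set C := Cdelta δ with hCdef
  set a := C * δ with ha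
  set b := C * (1 + δ) * ν with hb
  have ha0 : 0 < a := by positivity
  have ha1 : a ≤ 0.1152 := by nlinarith
  have hb0 : 0 ≤ b := by positivity
  have hb1 : b ≤ 0.12 := by nlinarith [mul_nonneg (by linarith : (0:ℝ) ≤ C) hν0]
  set S := {ω : ℝ | ω ∈ Set.Ico 0 (Real.pi / 2) ∧
    Real.arcsin (C * (δ * Real.tan ω + (1 + δ) * ν * (1 / Real.cos ω))) ≤ ω} with hS
  -- membership characterization
  have hmem : ∀ ω : ℝ, ω ∈ S ↔ ω ∈ Set.Ico 0 (Real.pi / 2) ∧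
      a * Real.sin ω + b ≤ Real.sin ω * Real.cos ω := by
    intro ω
    constructor
    · rintro ⟨hω, harc⟩
      refine ⟨hω, ?_⟩
      have hcos : 0 < Real.cos ω := Real.cos_pos_of_mem_Ioo
        ⟨by linarith [hω.1, Real.pi_pos], hω.2⟩
      rw [Real.arcsin_le_iff_le_sin' ⟨by linarith [hω.1, Real.pi_pos], hω.2⟩] at harc
      rw [Real.tan_eq_sin_div_cos] at harc
      have := mul_le_mul_of_nonneg_right harc hcos.le
      calc a * Real.sin ω + b
          = (C * (δ * (Real.sin ω / Real.cos ω) + (1 + δ) * ν * (1 / Real.cos ω))) * Real.cos ω := by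
            field_simp; ring
        _ ≤ Real.sin ω * Real.cos ω := this
    · rintro ⟨hω, hineq⟩
      refine ⟨hω, ?_⟩
      have hcos : 0 < Real.cos ω := Real.cos_pos_of_mem_Ioo
        ⟨by linarith [hω.1, Real.pi_pos], hω.2⟩
      rw [Real.arcsin_le_iff_le_sin' ⟨by linarith [hω.1, Real.pi_pos], hω.2⟩]
      rw [Real.tan_eq_sin_div_cos]
      rw [← mul_le_mul_iff_of_pos_right hcos]
      calc (C * (δ * (Real.sin ω / Real.cos ω) + (1 + δ) * ν * (1 / Real.cos ω))) * Real.cos ω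
          = a * Real.sin ω + b := by field_simp; ring
        _ ≤ Real.sin ω * Real.cos ω := hineq
  -- π/4 ∈ S
  have hpi4 : Real.pi / 4 ∈ S := by
    rw [hmem]
    have hpi : 3.14 ≤ Real.pi := by
      have := Real.pi_gt_d6; linarith
    have hsc : Real.sin (Real.pi/4) = Real.sqrt 2 / 2 := Real.sin_pi_div_four
    have hcc : Real.cos (Real.pi/4) = Real.sqrt 2 / 2 := Real.cos_pi_div_four
    have hs2 : Real.sqrt 2 ≤ 1.415 := by
      rw [show (1.415:ℝ) = Real.sqrt (1.415^2) by rw [Real.sqrt_sq]; norm_num]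
      apply Real.sqrt_le_sqrt; norm_num
    have hs2' : 1.41 ≤ Real.sqrt 2 := by
      rw [show (1.41:ℝ) = Real.sqrt (1.41^2) by rw [Real.sqrt_sq]; norm_num]
      apply Real.sqrt_le_sqrt; norm_num
    refine ⟨⟨by positivity, by linarith⟩, ?_⟩
    rw [hsc, hcc]
    have h2 : Real.sqrt 2 * Real.sqrt 2 = 2 := Real.mul_self_sqrt (by norm_num)
    nlinarith
  have hbdd : BddAbove S := ⟨Real.pi / 2, fun ω hω => ((hmem ω).1 hω).1.2.le⟩
  have hne : S.Nonempty := ⟨_, hpi4⟩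
  set ω₁ := Real.arccos a with hω₁
  have hcosω₁ : Real.cos ω₁ = a := Real.cos_arccos (by linarith) (by linarith)
  have hω₁lt : ω₁ < Real.pi / 2 := Real.arccos_lt_pi_div_two.2 ha0
  have hω₁0 : 0 ≤ ω₁ := Real.arccos_nonneg a
  -- S ⊆ [0, ω₁]
  have hSsub : ∀ ω ∈ S, ω ≤ ω₁ := by
    intro ω hω
    obtain ⟨⟨hω0, hωlt⟩, hineq⟩ := (hmem ω).1 hω
    by_contra hgt
    push_neg at hgt
    have hcoslt : Real.cos ω < a := by
      rw [← hcosω₁]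
      exact Real.cos_lt_cos_of_nonneg_of_le_pi hω₁0 (by linarith [Real.pi_pos]) hgt
    have hsinpos : 0 < Real.sin ω := Real.sin_pos_of_pos_of_lt_pi
      (lt_of_le_of_lt hω₁0 hgt) (by linarith [Real.pi_pos])
    nlinarith
  set ω' := sSup S with hω'
  have hω'S : omegaSup δ ν = ω' := rfl
  have hω'le : ω' ≤ ω₁ := csSup_le hne hSsub
  have hω'lt : ω' < Real.pi / 2 := lt_of_le_of_lt hω'le hω₁lt
  have hω'ge : Real.pi / 4 ≤ ω' := le_csSup hbdd hpi4
  have hω'0 : 0 ≤ ω' := le_trans (by positivity) hω'ge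
  -- h ω' ≥ 0 via closure
  set h : ℝ → ℝ := fun ω => Real.sin ω * Real.cos ω - a * Real.sin ω - b with hh
  have hcont : Continuous h := by fun_prop
  have hclosed : IsClosed {ω : ℝ | 0 ≤ h ω} := isClosed_le continuous_const hcont
  have hSsub2 : S ⊆ {ω : ℝ | 0 ≤ h ω} := by
    intro ω hω
    obtain ⟨_, hineq⟩ := (hmem ω).1 hω
    simp only [Set.mem_setOf_eq, hh]; linarith
  have hω'h : 0 ≤ h ω' := by
    have := csSup_mem_closure hne hbdd
    have := closure_minimal hSsub2 hclosed this
    exact this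
  -- h ω' ≤ 0
  have hω'h2 : h ω' ≤ 0 := by
    by_contra hpos
    push_neg at hpos
    have hopen : IsOpen {ω : ℝ | 0 < h ω} := isOpen_lt continuous_const hcont
    obtain ⟨ε, hε, hball⟩ := Metric.isOpen_iff.1 hopen ω' hpos
    obtain ⟨m, hm0, hmε, hmπ⟩ : ∃ m : ℝ, 0 < m ∧ m < ε ∧ ω' + m < Real.pi / 2 := by
      refine ⟨min (ε / 2) ((Real.pi / 2 - ω') / 2), lt_min (by linarith) (by linarith), ?_, ?_⟩
      · calc min (ε / 2) ((Real.pi / 2 - ω') / 2) ≤ ε / 2 := min_le_left _ _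
          _ < ε := by linarith
      · have := min_le_right (ε / 2) ((Real.pi / 2 - ω') / 2)
        linarith
    have h1 : ω' + m ∈ Metric.ball ω' ε := by
      rw [Metric.mem_ball, Real.dist_eq, add_sub_cancel_left, abs_of_pos hm0]
      exact hmε
    have h3 : 0 < h (ω' + m) := hball h1
    have h4 : ω' + m ∈ S := by
      rw [hmem]
      refine ⟨⟨by linarith, hmπ⟩, ?_⟩
      simp only [hh] at h3; linarith
    have := le_csSup hbdd h4
    linarith
  have heq : Real.sin ω' * Real.cos ω' = a * Real.sin ω' + b := by
    simp only [hh] at hω'h hω'h2; linarith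
  have hcos : 0 < Real.cos ω' := Real.cos_pos_of_mem_Ioo
    ⟨by linarith [Real.pi_pos], hω'lt⟩
  simp only [ha, hb] at heq
  have hmain : Real.sin ω' = C * (δ * Real.tan ω' + (1 + δ) * ν * (1 / Real.cos ω')) := by
    rw [Real.tan_eq_sin_div_cos]
    have hcne : Real.cos ω' ≠ 0 := ne_of_gt hcos
    field_simp
    linear_combination heq
  have hfinal : ω' = Real.arcsin (C * (δ * Real.tan ω' + (1 + δ) * ν * (1 / Real.cos ω'))) := by
    rw [← hmain, Real.arcsin_sin (by linarith [Real.pi_pos]) (by linarith)]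
  exact ⟨hω'lt, hmain, hfinal⟩
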